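/- Let F(w) = P(w) + R(w) where P(w) = (1/n) sum_{i=1}^n psi_i(w), each psi_i convex and differentiable with L_i-Lipschitz gradient, and R convex (possibly nonsmooth). Let L = max_i L_i and let w* minimize F. Then (1/n) sum_{i=1}^n ||nabla psi_i(w) - nabla psi_i(w*)||^2 <= 2L (F(w) - F(w*)) for all w. -/

import Mathlib

open scoped RealInnerProductSpace

section helpers

variable {E : Type*} [NormedAddCommGroup E] [InnerProductSpace ℝ E] [CompleteSpace E]

lemma line_hasDerivAt {f : E → ℝ} {g : E} (x v : E) (t : ℝ)
    (hf : HasGradientAt f g (x + t • v)) :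
    HasDerivAt (fun s : ℝ => f (x + s • v)) ⟪g, v⟫ t := by
  have hl : HasDerivAt (fun s : ℝ => x + s • v) v t := by
    simpa using ((hasDerivAt_id t).smul_const v).const_add x
  have hF := (hasGradientAt_iff_hasFDerivAt.mp hf).comp_hasDerivAt t hl
  simp [InnerProductSpace.toDual_apply_apply] at hF
  exact hF

lemma grad_ineq {f : E → ℝ} {f' : E → E}
    (hconv : ConvexOn ℝ Set.univ f) (hgrad : ∀ z, HasGradientAt f (f' z) z)
    (x y : E) : f x + ⟪f' x, y - x⟫ ≤ f y := by
  set φ : ℝ → ℝ := fun t => f (x + t • (y - x)) with hφ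
  have hφconv : ConvexOn ℝ Set.univ φ := by
    have := hconv.comp_affineMap (AffineMap.lineMap x y : ℝ →ᵃ[ℝ] E)
    simp only [Set.preimage_univ] at this
    rw [show φ = f ∘ (AffineMap.lineMap x y : ℝ →ᵃ[ℝ] E) from ?_]
    · exact this
    funext t
    simp [φ, AffineMap.lineMap_apply, add_comm]
  have hder : HasDerivAt φ ⟪f' x, y - x⟫ 0 := by
    have := line_hasDerivAt x (y - x) 0 (by simpa using hgrad x)
    exact this
  have hs := hφconv.le_slope_of_hasDerivAt (Set.mem_univ (0:ℝ)) (Set.mem_univ (1:ℝ))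
    one_pos hder
  have h0 : φ 0 = f x := by simp [φ]
  have h1 : φ 1 = f y := by simp [φ]
  rw [slope_def_field, h0, h1] at hs
  simp at hs
  linarith

lemma descent {f : E → ℝ} {f' : E → E} {L : ℝ} (hL : 0 ≤ L)
    (hgrad : ∀ z, HasGradientAt f (f' z) z)
    (hlip : ∀ u v, ‖f' u - f' v‖ ≤ L * ‖u - v‖)
    (x y : E) : f y ≤ f x + ⟪f' x, y - x⟫ + L / 2 * ‖y - x‖ ^ 2 := by
  set v := y - x with hv
  set χ : ℝ → ℝ := fun t => f x + t * ⟪f' x, v⟫ + (L / 2 * ‖v‖ ^ 2) * t ^ 2 - f (x + t • v)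
    with hχ
  have hder : ∀ t : ℝ, HasDerivAt χ
      (⟪f' x, v⟫ + (L / 2 * ‖v‖ ^ 2) * (2 * t) - ⟪f' (x + t • v), v⟫) t := by
    intro t
    have h1 : HasDerivAt (fun t : ℝ => f x + t * ⟪f' x, v⟫ + (L / 2 * ‖v‖ ^ 2) * t ^ 2)
        (⟪f' x, v⟫ + (L / 2 * ‖v‖ ^ 2) * (2 * t)) t := by
      have := ((hasDerivAt_mul_const (c := ⟪f' x, v⟫) (x := t)).const_add (f x)).add
        (((hasDerivAt_pow 2 t)).const_mul (L / 2 * ‖v‖ ^ 2))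
      simp at this
      exact this
    exact h1.sub (line_hasDerivAt x v t (hgrad _))
  have hmono : MonotoneOn χ (Set.Icc (0:ℝ) 1) := by
    apply monotoneOn_of_deriv_nonneg (convex_Icc 0 1)
    · exact (fun t _ => (hder t).differentiableAt.continuousAt.continuousWithinAt)
    · exact fun t _ => ((hder t).differentiableAt).differentiableWithinAt
    · intro t ht
      rw [interior_Icc] at ht
      rw [(hder t).deriv]
      have hip : ⟪f' (x + t • v) - f' x, v⟫ ≤ L * t * ‖v‖ ^ 2 := by
        calc ⟪f' (x + t • v) - f' x, v⟫ ≤ ‖f' (x + t • v) - f' x‖ * ‖v‖ :=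
              real_inner_le_norm _ _
          _ ≤ (L * ‖(x + t • v) - x‖) * ‖v‖ := by
              have := hlip (x + t • v) x
              nlinarith [norm_nonneg v, this]
          _ = L * t * ‖v‖ ^ 2 := by
              rw [add_sub_cancel_left, norm_smul, Real.norm_eq_abs,
                abs_of_pos ht.1]
              ring
      rw [inner_sub_left] at hip
      nlinarith
  have h01 := hmono (Set.mem_Icc.mpr ⟨le_refl 0, zero_le_one⟩)
    (Set.mem_Icc.mpr ⟨zero_le_one, le_refl 1⟩) zero_le_one
  have hz : χ 0 = 0 := by simp [χ]
  have ho : χ 1 = f x + ⟪f' x, v⟫ + (L / 2 * ‖v‖ ^ 2) - f y := by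
    simp [χ, hv]
  rw [hz, ho] at h01
  linarith

lemma coco {f : E → ℝ} {f' : E → E} {L : ℝ} (hL : 0 < L)
    (hconv : ConvexOn ℝ Set.univ f) (hgrad : ∀ z, HasGradientAt f (f' z) z)
    (hlip : ∀ u v, ‖f' u - f' v‖ ≤ L * ‖u - v‖)
    (x y : E) : ‖f' x - f' y‖ ^ 2 ≤ 2 * L * (f x - f y - ⟪f' y, x - y⟫) := by
  set h : E → ℝ := fun z => f z - ⟪f' y, z⟫ with hh
  set h' : E → E := fun z => f' z - f' y with hh'
  have hgradh : ∀ z, HasGradientAt h (h' z) z := by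
    intro z
    rw [hasGradientAt_iff_hasFDerivAt]
    have h1 := hasGradientAt_iff_hasFDerivAt.mp (hgrad z)
    have h2 : HasFDerivAt (fun z : E => ⟪f' y, z⟫)
        (InnerProductSpace.toDual ℝ E (f' y)) z :=
      (InnerProductSpace.toDual ℝ E (f' y)).hasFDerivAt
    have := h1.sub h2
    simp only [hh', map_sub]
    exact this
  have hliph : ∀ u v, ‖h' u - h' v‖ ≤ L * ‖u - v‖ := by
    intro u v; simpa [hh'] using hlip u v
  -- h y ≤ h z for all z, from grad_ineq applied to f at y
  have hmin : ∀ z, h y ≤ h z := by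
    intro z
    have := grad_ineq hconv hgrad y z
    simp only [hh, inner_sub_right] at this ⊢
    linarith
  set z := x - L⁻¹ • (f' x - f' y) with hz
  have hd := descent hL.le hgradh hliph x z
  have hzx : z - x = -(L⁻¹ • (f' x - f' y)) := by rw [hz]; abel
  have e1 : ⟪h' x, z - x⟫ = - (L⁻¹ * ‖f' x - f' y‖ ^ 2) := by
    rw [hzx, inner_neg_right, real_inner_smul_right]
    simp [hh', real_inner_self_eq_norm_sq]
  have e2 : ‖z - x‖ ^ 2 = L⁻¹ ^ 2 * ‖f' x - f' y‖ ^ 2 := by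
    rw [hzx, norm_neg, norm_smul, Real.norm_eq_abs, abs_of_pos (inv_pos.mpr hL)]
    ring
  have hkey : h y ≤ h x - (2 * L)⁻¹ * ‖f' x - f' y‖ ^ 2 := by
    have := (hmin z).trans hd
    rw [e1, e2] at this
    have hL' : L ≠ 0 := hL.ne'
    calc h y ≤ h x + -(L⁻¹ * ‖f' x - f' y‖ ^ 2) + L / 2 * (L⁻¹ ^ 2 * ‖f' x - f' y‖ ^ 2) :=
          this
      _ = h x - (2 * L)⁻¹ * ‖f' x - f' y‖ ^ 2 := by field_simp; ring
  have hhx : h x = f x - ⟪f' y, x⟫ := rfl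
  have hhy : h y = f y - ⟪f' y, y⟫ := rfl
  have hin : ⟪f' y, x - y⟫ = ⟪f' y, x⟫ - ⟪f' y, y⟫ := inner_sub_right _ _ _
  rw [hhx, hhy] at hkey
  have hL' : (L:ℝ) ≠ 0 := hL.ne'
  rw [hin]
  have : (2 * L)⁻¹ * ‖f' x - f' y‖ ^ 2 ≤ (f x - ⟪f' y, x⟫) - (f y - ⟪f' y, y⟫) := by
    linarith
  calc ‖f' x - f' y‖ ^ 2 = (2 * L) * ((2 * L)⁻¹ * ‖f' x - f' y‖ ^ 2) := by
        field_simp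
    _ ≤ 2 * L * (f x - f y - (⟪f' y, x⟫ - ⟪f' y, y⟫)) := by
        have h2L : (0:ℝ) < 2 * L := by linarith
        have := mul_le_mul_of_nonneg_left this h2L.le
        linarith [this]

end helpers


theorem stmt_2 {d n : ℕ} (hn : 0 < n)
    (ψ : Fin n → EuclideanSpace ℝ (Fin d) → ℝ)
    (ψ' : Fin n → EuclideanSpace ℝ (Fin d) → EuclideanSpace ℝ (Fin d))
    (Li : Fin n → ℝ) (L : ℝ)
    (hψconv : ∀ i, ConvexOn ℝ Set.univ (ψ i))
    (hψgrad : ∀ i w, HasGradientAt (ψ i) (ψ' i w) w)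
    (hψlip : ∀ i u v, ‖ψ' i u - ψ' i v‖ ≤ Li i * ‖u - v‖)
    (hLmax : ∀ i, Li i ≤ L) (hLmem : ∃ i, L = Li i)
    (R : EuclideanSpace ℝ (Fin d) → ℝ) (hR : ConvexOn ℝ Set.univ R)
    (P : EuclideanSpace ℝ (Fin d) → ℝ)
    (hP : ∀ w, P w = (n : ℝ)⁻¹ * ∑ i, ψ i w)
    (F : EuclideanSpace ℝ (Fin d) → ℝ)
    (hF : ∀ w, F w = P w + R w)
    (wstar : EuclideanSpace ℝ (Fin d)) (hmin : ∀ w, F wstar ≤ F w) :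
    ∀ w, (n : ℝ)⁻¹ * ∑ i, ‖ψ' i w - ψ' i wstar‖ ^ 2 ≤ 2 * L * (F w - F wstar) := by
  intro w
  have hninv : (0:ℝ) < (n:ℝ)⁻¹ := by positivity
  -- trivial case: the space is a subsingleton (d = 0)
  by_cases hd : d = 0
  · subst hd
    have hsw : w = wstar := Subsingleton.elim _ _
    subst hsw
    simp
  -- otherwise L ≥ 0
  have hE : ∃ u v : EuclideanSpace ℝ (Fin d), ‖u - v‖ = 1 := by
    refine ⟨EuclideanSpace.single ⟨0, Nat.pos_of_ne_zero hd⟩ 1, 0, ?_⟩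
    simp [EuclideanSpace.norm_single]
  obtain ⟨u0, v0, huv⟩ := hE
  have hLnn : 0 ≤ L := by
    obtain ⟨i0, hi0⟩ := hLmem
    have := hψlip i0 u0 v0
    rw [huv, mul_one] at this
    have := (norm_nonneg _).trans this
    linarith [hLmax i0]
  rcases eq_or_lt_of_le hLnn with hL0 | hLpos
  · -- L = 0 : all gradients are constant
    have hzero : ∀ i, ‖ψ' i w - ψ' i wstar‖ = 0 := by
      intro i
      have h1 := hψlip i w wstar
      have h2 : Li i * ‖w - wstar‖ ≤ 0 := by
        have := hLmax i
        nlinarith [norm_nonneg (w - wstar)]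
      exact le_antisymm (h1.trans h2) (norm_nonneg _)
    rw [← hL0]
    simp [hzero]
  -- main case L > 0
  set v := w - wstar with hv
  set G : EuclideanSpace ℝ (Fin d) → EuclideanSpace ℝ (Fin d) :=
    fun z => (n : ℝ)⁻¹ • ∑ i, ψ' i z with hG
  have hPe : P = fun w => (n : ℝ)⁻¹ * ∑ i, ψ i w := funext hP
  have hPg : ∀ z, HasGradientAt P (G z) z := by
    intro z
    rw [hasGradientAt_iff_hasFDerivAt, hG, map_smul, map_sum, hPe]
    have hsum : HasFDerivAt (fun w : EuclideanSpace ℝ (Fin d) => ∑ i, ψ i w)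
        (∑ i, InnerProductSpace.toDual ℝ _ (ψ' i z)) z :=
      HasFDerivAt.fun_sum (fun i _ => hasGradientAt_iff_hasFDerivAt.mp (hψgrad i z))
    have := hsum.const_smul ((n : ℝ)⁻¹)
    exact this
  have hGlip : ∀ u v', ‖G u - G v'‖ ≤ L * ‖u - v'‖ := by
    intro u v'
    have h1 : G u - G v' = (n : ℝ)⁻¹ • ∑ i, (ψ' i u - ψ' i v') := by
      rw [hG]
      simp [Finset.sum_sub_distrib, smul_sub]
    rw [h1, norm_smul, Real.norm_eq_abs, abs_of_pos hninv]
    calc (n : ℝ)⁻¹ * ‖∑ i, (ψ' i u - ψ' i v')‖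
        ≤ (n : ℝ)⁻¹ * ∑ i, ‖ψ' i u - ψ' i v'‖ := by
          exact mul_le_mul_of_nonneg_left (norm_sum_le _ _) hninv.le
      _ ≤ (n : ℝ)⁻¹ * ∑ _i : Fin n, (L * ‖u - v'‖) := by
          refine mul_le_mul_of_nonneg_left (Finset.sum_le_sum fun i _ => ?_) hninv.le
          calc ‖ψ' i u - ψ' i v'‖ ≤ Li i * ‖u - v'‖ := hψlip i u v'
            _ ≤ L * ‖u - v'‖ := mul_le_mul_of_nonneg_right (hLmax i) (norm_nonneg _)
      _ = L * ‖u - v'‖ := by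
          rw [Finset.sum_const, Finset.card_univ, Fintype.card_fin, nsmul_eq_mul]
          field_simp
  -- per-summand cocoercivity with constant L
  have hcoco : ∀ i, ‖ψ' i w - ψ' i wstar‖ ^ 2
      ≤ 2 * L * (ψ i w - ψ i wstar - ⟪ψ' i wstar, v⟫) := by
    intro i
    refine coco hLpos (hψconv i) (hψgrad i) (fun u v' => ?_) w wstar
    calc ‖ψ' i u - ψ' i v'‖ ≤ Li i * ‖u - v'‖ := hψlip i u v'
      _ ≤ L * ‖u - v'‖ := mul_le_mul_of_nonneg_right (hLmax i) (norm_nonneg _)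
  have hGi : ⟪G wstar, v⟫ = (n : ℝ)⁻¹ * ∑ i, ⟪ψ' i wstar, v⟫ := by
    rw [hG, real_inner_smul_left, sum_inner]
  -- first-order optimality at wstar
  set a : ℝ := ⟪G wstar, v⟫ with ha
  have hopt : -(R w - R wstar) ≤ a := by
    set c : ℝ := L / 2 * ‖v‖ ^ 2 with hc
    have hcnn : 0 ≤ c := by positivity
    refine le_of_forall_pos_le_add fun ε hε => ?_
    set t : ℝ := min 1 (ε / (c + 1)) with ht
    have htpos : 0 < t := lt_min one_pos (by positivity)
    have ht1 : t ≤ 1 := min_le_left _ _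
    have hct : c * t ≤ ε := by
      have h2 : t ≤ ε / (c + 1) := min_le_right _ _
      have h3 : c * t ≤ c * (ε / (c + 1)) := mul_le_mul_of_nonneg_left h2 hcnn
      have h4 : c * (ε / (c + 1)) ≤ ε := by
        rw [mul_comm, div_mul_eq_mul_div, div_le_iff₀ (by linarith : (0:ℝ) < c + 1)]
        nlinarith
      linarith
    have hFt := hmin (wstar + t • v)
    have hcomb : (1 - t) • wstar + t • w = wstar + t • v := by
      rw [hv, smul_sub, sub_smul, one_smul]
      abel
    have hRt : R (wstar + t • v) ≤ (1 - t) * R wstar + t * R w := by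
      have := hR.2 (Set.mem_univ wstar) (Set.mem_univ w)
        (by linarith : (0:ℝ) ≤ 1 - t) htpos.le (by ring)
      simpa [hcomb, smul_eq_mul] using this
    have hDt : P (wstar + t • v) ≤ P wstar + t * a + c * t ^ 2 := by
      have hdes := descent hLpos.le hPg hGlip wstar (wstar + t • v)
      rw [add_sub_cancel_left, real_inner_smul_right, norm_smul, Real.norm_eq_abs,
        abs_of_pos htpos, ← ha] at hdes
      have he : L / 2 * (t * ‖v‖) ^ 2 = c * t ^ 2 := by rw [hc]; ring
      linarith [hdes, he]
    have hFeq1 := hF wstar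
    have hFeq2 := hF (wstar + t • v)
    have hstep : 0 ≤ t * a + c * t ^ 2 + t * R w - t * R wstar := by linarith
    have hfac : t * a + c * t ^ 2 + t * R w - t * R wstar
        = t * (a + c * t + (R w - R wstar)) := by ring
    have h6 : t * 0 ≤ t * (a + c * t + (R w - R wstar)) := by
      rw [mul_zero, ← hfac]; exact hstep
    have h7 := le_of_mul_le_mul_left h6 htpos
    linarith
  -- put everything together
  have hsum2 : ∑ i, ‖ψ' i w - ψ' i wstar‖ ^ 2
      ≤ 2 * L * ((∑ i, ψ i w) - (∑ i, ψ i wstar) - ∑ i, ⟪ψ' i wstar, v⟫) := by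
    calc ∑ i, ‖ψ' i w - ψ' i wstar‖ ^ 2
        ≤ ∑ i, 2 * L * (ψ i w - ψ i wstar - ⟪ψ' i wstar, v⟫) :=
          Finset.sum_le_sum fun i _ => hcoco i
      _ = 2 * L * ((∑ i, ψ i w) - (∑ i, ψ i wstar) - ∑ i, ⟪ψ' i wstar, v⟫) := by
          rw [← Finset.mul_sum, Finset.sum_sub_distrib, Finset.sum_sub_distrib]
  calc (n : ℝ)⁻¹ * ∑ i, ‖ψ' i w - ψ' i wstar‖ ^ 2
      ≤ (n : ℝ)⁻¹ * (2 * L * ((∑ i, ψ i w) - (∑ i, ψ i wstar) - ∑ i, ⟪ψ' i wstar, v⟫)) :=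
        mul_le_mul_of_nonneg_left hsum2 hninv.le
    _ = 2 * L * (P w - P wstar - a) := by
        rw [hP w, hP wstar, hGi]; ring
    _ ≤ 2 * L * (F w - F wstar) := by
        have hFw := hF w
        have hFs := hF wstar
        have h6 : P w - P wstar - a ≤ F w - F wstar := by linarith
        exact mul_le_mul_of_nonneg_left h6 (by linarith)
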